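/- Let A be a set, X a rack, and f : A → X any map. Then there exists a unique rack homomorphism g : FR(A) → X such that g(ι(a)) = f(a) for all a ∈ A, where ι : A → FR(A) is the map a ↦ (1, a) (here 1 denotes the identity element of the free group F(A)). That is, the free rack FR(A) satisfies the universal property of the free rack on A. -/

import Mathlib

/-- The free rack operation on `FreeGroup A × A`:
`(u, a) ▷ (v, b) = (u * a * u⁻¹ * v, b)`. -/
def freeRackOp (A : Type*) : FreeGroup A × A → FreeGroup A × A → FreeGroup A × A :=
  fun p q => (p.1 * FreeGroup.of p.2 * p.1⁻¹ * q.1, q.2)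

/-- Universal property of the free rack: for any rack `(X, op)` and any map
`f : A → X` there is a unique rack homomorphism `g : FR(A) → X` with
`g (1, a) = f a` for all `a ∈ A`. -/
theorem stmt_2 {A X : Type*} (op : X → X → X)
    (hdist : ∀ a b c : X, op a (op b c) = op (op a b) (op a c))
    (hbij : ∀ a c : X, ∃! b : X, op a b = c)
    (f : A → X) :
    ∃! g : FreeGroup A × A → X,
      (∀ p q : FreeGroup A × A, g (freeRackOp A p q) = op (g p) (g q)) ∧
      (∀ a : A, g (1, a) = f a) := by
  classical
  have hinj : ∀ a : X, Function.Injective (op a) := by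
    intro a x y h
    obtain ⟨b, _, hu⟩ := hbij a (op a y)
    rw [hu x h, hu y rfl]
  have hsurj : ∀ a : X, Function.Surjective (op a) := by
    intro a c
    obtain ⟨b, hb, _⟩ := hbij a c
    exact ⟨b, hb⟩
  -- permutations
  let e : X → Equiv.Perm X := fun a => Equiv.ofBijective (op a) ⟨hinj a, hsurj a⟩
  have he : ∀ a x, e a x = op a x := fun _ _ => rfl
  let φ : FreeGroup A →* Equiv.Perm X := FreeGroup.lift (fun a => e (f a))
  -- every φ u is a rack automorphism
  have aut : ∀ u : FreeGroup A, ∀ y z : X, φ u (op y z) = op (φ u y) (φ u z) := by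
    intro u
    induction u using FreeGroup.induction_on with
    | C1 => intro y z; simp
    | of a =>
      intro y z
      show (φ (FreeGroup.of a)) (op y z) = op ((φ (FreeGroup.of a)) y) ((φ (FreeGroup.of a)) z)
      have h : φ (FreeGroup.of a) = e (f a) := FreeGroup.lift_apply_of
      rw [h, he, he, he]; exact hdist _ _ _
    | inv_of a ih =>
      intro y z
      show (φ (FreeGroup.of a)⁻¹) (op y z) = op ((φ (FreeGroup.of a)⁻¹) y) ((φ (FreeGroup.of a)⁻¹) z)
      have hofa : φ (FreeGroup.of a) = e (f a) := FreeGroup.lift_apply_of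
      have h2 : ∀ w : X, op (f a) (φ (FreeGroup.of a)⁻¹ w) = w := by
        intro w
        calc op (f a) (φ (FreeGroup.of a)⁻¹ w)
            = φ (FreeGroup.of a) (φ (FreeGroup.of a)⁻¹ w) := by rw [hofa, he]
          _ = w := by rw [map_inv]; exact Equiv.apply_symm_apply _ _
      apply hinj (f a)
      rw [h2]
      calc op y z = op (op (f a) (φ (FreeGroup.of a)⁻¹ y)) (op (f a) (φ (FreeGroup.of a)⁻¹ z)) := by
              rw [h2, h2]
        _ = op (f a) (op (φ (FreeGroup.of a)⁻¹ y) (φ (FreeGroup.of a)⁻¹ z)) := (hdist _ _ _).symm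
    | mul u v ihu ihv =>
      intro y z
      rw [map_mul]
      simp only [Equiv.Perm.mul_apply]
      rw [ihv, ihu]
  -- the candidate map
  set G : FreeGroup A × A → X := fun p => φ p.1 (f p.2) with hG
  have Ghom : ∀ p q : FreeGroup A × A, G (freeRackOp A p q) = op (G p) (G q) := by
    rintro ⟨u, a⟩ ⟨v, b⟩
    simp only [hG, freeRackOp, map_mul, map_inv, Equiv.Perm.mul_apply]
    have : φ (FreeGroup.of a) ((φ u)⁻¹ (φ v (f b)))
        = op (f a) ((φ u)⁻¹ (φ v (f b))) := by
      simp only [φ, FreeGroup.lift_apply_of]; rw [he]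
    rw [this, aut u]
    congr 1
    exact Equiv.apply_symm_apply _ _
  have Gbase : ∀ a : A, G (1, a) = f a := by intro a; simp [hG]
  -- key recurrence satisfied by any solution
  have key1 : ∀ g : FreeGroup A × A → X,
      (∀ p q, g (freeRackOp A p q) = op (g p) (g q)) →
      ∀ (a : A) (u : FreeGroup A) (b : A),
        g (FreeGroup.of a * u, b) = op (g (1, a)) (g (u, b)) := by
    intro g hg a u b
    have := hg (1, a) (u, b)
    simpa [freeRackOp] using this
  refine ⟨G, ⟨Ghom, Gbase⟩, ?_⟩
  rintro g ⟨ghom, gbase⟩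
  funext p
  obtain ⟨u, b⟩ := p
  -- reduce to word induction
  suffices h : ∀ (L : List (A × Bool)) (b : A), g (FreeGroup.mk L, b) = G (FreeGroup.mk L, b) by
    have := h u.toWord b
    rwa [u.mk_toWord] at this
  intro L
  induction L with
  | nil =>
    intro b
    have h1 : (FreeGroup.mk ([] : List (A × Bool))) = (1 : FreeGroup A) := rfl
    rw [h1, gbase b, Gbase b]
  | cons x L ih =>
    intro b
    obtain ⟨a, bb⟩ := x
    have hsplit : FreeGroup.mk ((a, bb) :: L) = FreeGroup.mk [(a, bb)] * FreeGroup.mk L := by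
      rw [FreeGroup.mul_mk]
      rfl
    cases bb with
    | true =>
      have hof : FreeGroup.mk [(a, true)] = FreeGroup.of a := rfl
      rw [hsplit, hof, key1 g ghom, key1 G Ghom, gbase, Gbase, ih b]
    | false =>
      have hof : FreeGroup.mk [(a, false)] = (FreeGroup.of a)⁻¹ := by
        rw [FreeGroup.of, FreeGroup.inv_mk]; rfl
      rw [hsplit, hof]
      apply hinj (f a)
      have hg' : op (f a) (g ((FreeGroup.of a)⁻¹ * FreeGroup.mk L, b)) = g (FreeGroup.mk L, b) := by
        have := key1 g ghom a ((FreeGroup.of a)⁻¹ * FreeGroup.mk L) b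
        rw [gbase] at this
        rw [← this, ← mul_assoc, mul_inv_cancel, one_mul]
      have hG' : op (f a) (G ((FreeGroup.of a)⁻¹ * FreeGroup.mk L, b)) = G (FreeGroup.mk L, b) := by
        have := key1 G Ghom a ((FreeGroup.of a)⁻¹ * FreeGroup.mk L) b
        rw [Gbase] at this
        rw [← this, ← mul_assoc, mul_inv_cancel, one_mul]
      rw [hg', hG', ih b]
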